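/- Let f : ℝ^d → V be a bounded measurable function into a separable Banach space with the property that lim_{l(b-a)→∞} (1/w(b-a)) ∫_a^b f(x) dx = L ∈ V (over all boxes [a,b] ⊂ ℝ^d with min side length → ∞). Then for every Følner sequence (Φ_N) in ℝ^d, lim_{N→∞} (1/w(Φ_N)) ∫_{Φ_N} f(x) dx = L. -/

import Mathlib

open MeasureTheory Filter Topology
open scoped ENNReal

section aux

variable {V : Type*} [NormedAddCommGroup V] [NormedSpace ℝ V]
    [CompleteSpace V] [SecondCountableTopology V] {d : ℕ}

lemma aux_finiteRestrict {α : Type*} [MeasurableSpace α] {μ : Measure α} {s : Set α}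
    (hs : μ s < ⊤) : IsFiniteMeasure (μ.restrict s) :=
  ⟨by rwa [Measure.restrict_apply_univ]⟩

lemma aux_image_eq_preimage (t : Fin d → ℝ) (s : Set (Fin d → ℝ)) :
    (fun x => x + t) '' s = (fun x => x + (-t)) ⁻¹' s := by
  ext x
  simp only [Set.mem_image, Set.mem_preimage]
  constructor
  · rintro ⟨y, hy, rfl⟩; simpa using hy
  · intro h; exact ⟨x + -t, h, by simp⟩

lemma aux_volume_image (t : Fin d → ℝ) (s : Set (Fin d → ℝ)) :
    volume ((fun x => x + t) '' s) = volume s := by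
  rw [aux_image_eq_preimage, measure_preimage_add_right]

lemma aux_meas_symm {s : Set (Fin d → ℝ)} (hs : MeasurableSet s) :
    Measurable fun t : Fin d → ℝ => volume (symmDiff s ((fun x => x + t) '' s)) := by
  have hT : MeasurableSet {p : (Fin d → ℝ) × (Fin d → ℝ) | p.2 + -p.1 ∈ s} :=
    (measurable_snd.add measurable_fst.neg) hs
  have hS : MeasurableSet {p : (Fin d → ℝ) × (Fin d → ℝ) |
      p.2 ∈ symmDiff s ((fun x => x + p.1) '' s)} := by
    have heq : {p : (Fin d → ℝ) × (Fin d → ℝ) | p.2 ∈ symmDiff s ((fun x => x + p.1) '' s)}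
        = ((Prod.snd ⁻¹' s) \ {p | p.2 + -p.1 ∈ s})
          ∪ ({p : (Fin d → ℝ) × (Fin d → ℝ) | p.2 + -p.1 ∈ s} \ (Prod.snd ⁻¹' s)) := by
      ext p
      rw [Set.mem_setOf_eq, aux_image_eq_preimage]
      simp [Set.symmDiff_def]
    rw [heq]
    exact ((measurable_snd hs).diff hT).union (hT.diff (measurable_snd hs))
  exact measurable_measure_prodMk_left hS

lemma aux_integrable {α : Type*} [MeasurableSpace α] {μ : Measure α} [IsFiniteMeasure μ]
    {f : α → V} (hf : AEStronglyMeasurable f μ) {M : ℝ} (hM : ∀ x, ‖f x‖ ≤ M) :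
    Integrable f μ :=
  (integrable_const M).mono' hf (ae_of_all _ hM)

lemma aux_diff_bound {f : (Fin d → ℝ) → V} (hmeas : StronglyMeasurable f)
    {M : ℝ} (hbd : ∀ x, ‖f x‖ ≤ M) {A B : Set (Fin d → ℝ)}
    (hA : MeasurableSet A) (hB : MeasurableSet B)
    (hAf : volume A < ⊤) (hBf : volume B < ⊤) :
    ‖(∫ x in A, f x) - ∫ x in B, f x‖ ≤ M * (volume (symmDiff A B)).toReal := by
  have hint : ∀ s : Set (Fin d → ℝ), volume s < ⊤ → IntegrableOn f s volume := fun s hs =>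
    haveI := aux_finiteRestrict hs
    aux_integrable hmeas.aestronglyMeasurable hbd
  have hsplitA : (∫ x in A, f x) = (∫ x in A ∩ B, f x) + ∫ x in A \ B, f x := by
    rw [← setIntegral_union (Set.disjoint_sdiff_right.mono_left Set.inter_subset_right)
      (hA.diff hB)
      (hint _ (lt_of_le_of_lt (measure_mono Set.inter_subset_left) hAf))
      (hint _ (lt_of_le_of_lt (measure_mono Set.diff_subset) hAf))]
    rw [Set.inter_union_diff]
  have hsplitB : (∫ x in B, f x) = (∫ x in A ∩ B, f x) + ∫ x in B \ A, f x := by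
    rw [← setIntegral_union (Set.disjoint_sdiff_right.mono_left Set.inter_subset_left)
      (hB.diff hA)
      (hint _ (lt_of_le_of_lt (measure_mono Set.inter_subset_left) hAf))
      (hint _ (lt_of_le_of_lt (measure_mono Set.diff_subset) hBf))]
    rw [Set.inter_comm, Set.inter_union_diff]
  have hkey : (∫ x in A, f x) - ∫ x in B, f x = (∫ x in A \ B, f x) - ∫ x in B \ A, f x := by
    rw [hsplitA, hsplitB]; abel
  rw [hkey]
  have h1 : ‖∫ x in A \ B, f x‖ ≤ M * (volume (A \ B)).toReal :=
    norm_setIntegral_le_of_norm_le_const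
      (lt_of_le_of_lt (measure_mono Set.diff_subset) hAf) (fun x _ => hbd x)
  have h2 : ‖∫ x in B \ A, f x‖ ≤ M * (volume (B \ A)).toReal :=
    norm_setIntegral_le_of_norm_le_const
      (lt_of_le_of_lt (measure_mono Set.diff_subset) hBf) (fun x _ => hbd x)
  have hvol : (volume (symmDiff A B)).toReal
      = (volume (A \ B)).toReal + (volume (B \ A)).toReal := by
    rw [Set.symmDiff_def, measure_union (disjoint_sdiff_sdiff) (hB.diff hA),
      ENNReal.toReal_add
        (lt_of_le_of_lt (measure_mono Set.diff_subset) hAf).ne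
        (lt_of_le_of_lt (measure_mono Set.diff_subset) hBf).ne]
  calc ‖(∫ x in A \ B, f x) - ∫ x in B \ A, f x‖
      ≤ ‖∫ x in A \ B, f x‖ + ‖∫ x in B \ A, f x‖ := norm_sub_le _ _
    _ ≤ M * (volume (A \ B)).toReal + M * (volume (B \ A)).toReal := add_le_add h1 h2
    _ = M * (volume (symmDiff A B)).toReal := by rw [hvol]; ring

end aux
theorem stmt16 {V : Type*} [NormedAddCommGroup V] [NormedSpace ℝ V]
    [CompleteSpace V] [SecondCountableTopology V]
    {d : ℕ} (f : (Fin d → ℝ) → V) (hmeas : StronglyMeasurable f)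
    (M : ℝ) (hbd : ∀ x, ‖f x‖ ≤ M)
    (L : V)
    (hbox : ∀ ε > (0:ℝ), ∃ B : ℝ, ∀ a b : Fin d → ℝ, a ≤ b →
      (∀ i, B < b i - a i) →
      ‖(∏ i, (b i - a i))⁻¹ • ∫ x in Set.Icc a b, f x - L‖ < ε)
    (Φ : ℕ → Set (Fin d → ℝ)) (hΦmeas : ∀ N, MeasurableSet (Φ N))
    (hΦpos : ∀ N, 0 < volume (Φ N)) (hΦfin : ∀ N, volume (Φ N) < ⊤)
    (hFolner : ∀ y : Fin d → ℝ,
      Tendsto (fun N => volume (symmDiff (Φ N) ((fun x => x + y) '' Φ N)) / volume (Φ N))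
        atTop (𝓝 0)) :
    Tendsto (fun N => ((volume (Φ N)).toReal)⁻¹ • ∫ x in Φ N, f x) atTop (𝓝 L) := by
  have hM0 : 0 ≤ M := le_trans (norm_nonneg _) (hbd 0)
  have hc : ∀ N, 0 < (volume (Φ N)).toReal :=
    fun N => ENNReal.toReal_pos (hΦpos N).ne' (hΦfin N).ne
  rw [Metric.tendsto_nhds]
  intro ε hε
  obtain ⟨B, hB⟩ := hbox (ε / 2) (by positivity)
  set R : ℝ := max B 0 + 1 with hRdef
  have hR0 : 0 < R := by positivity
  have hBR : B < R := lt_of_le_of_lt (le_max_left B 0) (lt_add_one _)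
  set Q : Set (Fin d → ℝ) := Set.Icc 0 (fun _ => R) with hQdef
  have hQmeas : MeasurableSet Q := measurableSet_Icc
  set κ : ℝ := R ^ d with hκdef
  have hκ0 : 0 < κ := pow_pos hR0 d
  have hQvol : volume Q = ENNReal.ofReal κ := by
    rw [hQdef, Real.volume_Icc_pi]
    simp only [Pi.zero_apply, sub_zero, Finset.prod_const, Finset.card_univ, Fintype.card_fin]
    rw [hκdef, ENNReal.ofReal_pow hR0.le]
  have hQfin : volume Q < ⊤ := by rw [hQvol]; exact ENNReal.ofReal_lt_top
  have hQtoReal : (volume Q).toReal = κ := by rw [hQvol, ENNReal.toReal_ofReal hκ0.le]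
  haveI hQfm : IsFiniteMeasure (volume.restrict Q) := aux_finiteRestrict hQfin
  -- the box average estimate
  have hIcc : ∀ x : Fin d → ℝ, (fun t => t + x) '' Q = Set.Icc x (x + fun _ => R) := by
    intro x
    ext y
    simp only [Set.mem_image, Set.mem_Icc, hQdef]
    constructor
    · rintro ⟨t, ⟨h0, hRt⟩, rfl⟩
      constructor
      · intro i
        have := h0 i
        simp only [Pi.add_apply, Pi.zero_apply] at this ⊢
        linarith
      · intro i
        have := hRt i
        simp only [Pi.add_apply] at this ⊢
        linarith
    · rintro ⟨h1, h2⟩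
      refine ⟨y - x, ⟨fun i => ?_, fun i => ?_⟩, by simp⟩
      · have := h1 i
        simp only [Pi.sub_apply, Pi.zero_apply]
        linarith
      · have := h2 i
        simp only [Pi.add_apply] at this
        simp only [Pi.sub_apply]
        linarith
  have hxle : ∀ x : Fin d → ℝ, x ≤ x + fun _ => R := by
    intro x i
    simp only [Pi.add_apply]
    linarith
  have hbox' : ∀ x : Fin d → ℝ, ‖κ⁻¹ • (∫ t in Q, f (x + t)) - L‖ ≤ ε / 2 := by
    intro x
    have hchg : (∫ t in Q, f (x + t)) = ∫ y in Set.Icc x (x + fun _ => R), f y := by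
      calc (∫ t in Q, f (x + t)) = ∫ t in Q, f (t + x) := by simp_rw [add_comm]
        _ = ∫ y in (fun t => t + x) '' Q, f y :=
          ((measurePreserving_add_right volume x).setIntegral_image_emb
            (measurableEmbedding_addRight x) f Q).symm
        _ = _ := by rw [hIcc x]
    have hIccvol : (volume (Set.Icc x (x + fun _ => R))).toReal = κ := by
      rw [Real.volume_Icc_pi_toReal (hxle x)]
      simp [hκdef]
    have hIccfin : volume (Set.Icc x (x + fun _ => R)) < ⊤ := by
      rw [Real.volume_Icc_pi]
      exact ENNReal.prod_lt_top (fun i _ => ENNReal.ofReal_lt_top)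
    haveI := aux_finiteRestrict hIccfin
    have hfint : IntegrableOn f (Set.Icc x (x + fun _ => R)) volume :=
      aux_integrable hmeas.aestronglyMeasurable hbd
    have hprod : (∏ i, (((x + fun _ => R) : Fin d → ℝ) i - x i)) = κ := by
      simp [hκdef]
    have key := hB x (x + fun _ => R) (hxle x)
      (fun i => by simp only [Pi.add_apply]; linarith)
    rw [integral_sub hfint (integrable_const L), setIntegral_const, measureReal_def, hprod, hIccvol] at key
    rw [hchg]
    have hrw : κ⁻¹ • (∫ y in Set.Icc x (x + fun _ => R), f y) - L
        = κ⁻¹ • ((∫ y in Set.Icc x (x + fun _ => R), f y) - κ • L) := by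
      rw [smul_sub, smul_smul, inv_mul_cancel₀ hκ0.ne', one_smul]
    rw [hrw]
    exact le_of_lt key
  -- the Folner averages
  set ρ : ℕ → (Fin d → ℝ) → ℝ := fun N t =>
    (volume (symmDiff (Φ N) ((fun x => x + t) '' Φ N)) / volume (Φ N)).toReal with hρdef
  have hρ_nonneg : ∀ N t, 0 ≤ ρ N t := fun N t => ENNReal.toReal_nonneg
  have hρ_le : ∀ N t, ρ N t ≤ 2 := by
    intro N t
    have hsd : volume (symmDiff (Φ N) ((fun x => x + t) '' Φ N)) ≤ 2 * volume (Φ N) := by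
      calc volume (symmDiff (Φ N) ((fun x => x + t) '' Φ N))
          ≤ volume (Φ N ∪ (fun x => x + t) '' Φ N) := measure_mono Set.symmDiff_subset_union
        _ ≤ volume (Φ N) + volume ((fun x => x + t) '' Φ N) := measure_union_le _ _
        _ = 2 * volume (Φ N) := by rw [aux_volume_image, two_mul]
    have h1 : volume (symmDiff (Φ N) ((fun x => x + t) '' Φ N)) / volume (Φ N) ≤ 2 :=
      ENNReal.div_le_of_le_mul hsd
    calc ρ N t ≤ (2 : ℝ≥0∞).toReal := ENNReal.toReal_mono (by simp) h1
      _ = 2 := by simp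
  have hρ_meas : ∀ N, AEStronglyMeasurable (ρ N) (volume.restrict Q) := by
    intro N
    apply Measurable.aestronglyMeasurable
    apply Measurable.ennreal_toReal
    simp_rw [div_eq_mul_inv]
    exact (aux_meas_symm (hΦmeas N)).mul_const _
  have hρ_int : ∀ N, Integrable (ρ N) (volume.restrict Q) := fun N =>
    aux_integrable (hρ_meas N) (fun t => by
      rw [Real.norm_eq_abs, abs_of_nonneg (hρ_nonneg N t)]; exact hρ_le N t)
  have hρ_lim : ∀ t, Tendsto (fun N => ρ N t) atTop (𝓝 0) := by
    intro t
    have := (ENNReal.tendsto_toReal (by simp : (0 : ℝ≥0∞) ≠ ⊤)).comp (hFolner t)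
    simpa only [Function.comp_def, ENNReal.toReal_zero] using this
  have hDCT : Tendsto (fun N => ∫ t in Q, ρ N t) atTop (𝓝 0) := by
    have := tendsto_integral_of_dominated_convergence (μ := volume.restrict Q)
      (F := fun N t => ρ N t) (f := fun _ => (0 : ℝ)) (bound := fun _ => 2)
      hρ_meas (integrable_const 2)
      (fun N => ae_of_all _ fun t => by
        rw [Real.norm_eq_abs, abs_of_nonneg (hρ_nonneg N t)]; exact hρ_le N t)
      (ae_of_all _ fun t => hρ_lim t)
    simpa using this
  -- per-N key estimate
  have key : ∀ N, ‖((volume (Φ N)).toReal)⁻¹ • (∫ x in Φ N, f x) - L‖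
      ≤ ε / 2 + M * κ⁻¹ * ∫ t in Q, ρ N t := by
    intro N
    set c : ℝ := (volume (Φ N)).toReal with hcdef
    have hc0 : 0 < c := hc N
    haveI : IsFiniteMeasure (volume.restrict (Φ N)) := aux_finiteRestrict (hΦfin N)
    have hmeas2 : AEStronglyMeasurable (Function.uncurry fun t x : Fin d → ℝ => f (x + t))
        ((volume.restrict Q).prod (volume.restrict (Φ N))) :=
      (hmeas.comp_measurable (measurable_snd.add measurable_fst)).aestronglyMeasurable
    have hint2 : Integrable (Function.uncurry fun t x : Fin d → ℝ => f (x + t))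
        ((volume.restrict Q).prod (volume.restrict (Φ N))) :=
      aux_integrable hmeas2 (fun p => hbd _)
    have hswap : (∫ t in Q, ∫ x in Φ N, f (x + t)) = ∫ x in Φ N, ∫ t in Q, f (x + t) :=
      integral_integral_swap hint2
    have hg_int : Integrable (fun x => ∫ t in Q, f (x + t)) (volume.restrict (Φ N)) :=
      hint2.integral_prod_right
    have hI_int : Integrable (fun t => ∫ x in Φ N, f (x + t)) (volume.restrict Q) :=
      hint2.integral_prod_left
    set G : V := (c⁻¹ * κ⁻¹) • ∫ x in Φ N, ∫ t in Q, f (x + t) with hGdef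
    have hGL : ‖G - L‖ ≤ ε / 2 := by
      have h1 : G = c⁻¹ • ∫ x in Φ N, (κ⁻¹ • ∫ t in Q, f (x + t)) := by
        rw [integral_smul, hGdef, smul_smul]
      have h2 : Integrable (fun x => κ⁻¹ • ∫ t in Q, f (x + t)) (volume.restrict (Φ N)) :=
        hg_int.smul κ⁻¹
      have h3 : (∫ x in Φ N, ((κ⁻¹ • ∫ t in Q, f (x + t)) - L))
          = (∫ x in Φ N, κ⁻¹ • ∫ t in Q, f (x + t)) - c • L := by
        rw [integral_sub h2 (integrable_const L), setIntegral_const]; rfl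
      have h4 : ‖∫ x in Φ N, ((κ⁻¹ • ∫ t in Q, f (x + t)) - L)‖ ≤ (ε / 2) * c :=
        norm_setIntegral_le_of_norm_le_const (hΦfin N) (fun x _ => hbox' x)
      have h5 : G - L = c⁻¹ • ∫ x in Φ N, ((κ⁻¹ • ∫ t in Q, f (x + t)) - L) := by
        rw [h3, h1, smul_sub, smul_smul, inv_mul_cancel₀ hc0.ne', one_smul]
      rw [h5, norm_smul, Real.norm_eq_abs, abs_of_pos (inv_pos.2 hc0)]
      have h6 : c⁻¹ * ((ε / 2) * c) = ε / 2 := by field_simp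
      exact le_trans (mul_le_mul_of_nonneg_left h4 (inv_nonneg.2 hc0.le)) (le_of_eq h6)
    have hAG : ‖(c⁻¹ • ∫ x in Φ N, f x) - G‖ ≤ M * κ⁻¹ * ∫ t in Q, ρ N t := by
      have hJ : (c⁻¹ • ∫ x in Φ N, f x)
          = (c⁻¹ * κ⁻¹) • ∫ t in Q, (∫ x in Φ N, f x) := by
        rw [setIntegral_const, measureReal_def, hQtoReal, smul_smul]
        congr 1
        field_simp
      have hG2 : G = (c⁻¹ * κ⁻¹) • ∫ t in Q, ∫ x in Φ N, f (x + t) := by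
        rw [hGdef, hswap]
      rw [hJ, hG2, ← smul_sub]
      have hsub : (∫ t in Q, (∫ x in Φ N, f x)) - (∫ t in Q, ∫ x in Φ N, f (x + t))
          = ∫ t in Q, ((∫ x in Φ N, f x) - ∫ x in Φ N, f (x + t)) := by
        rw [integral_sub (integrable_const _) hI_int]
      rw [hsub, norm_smul, Real.norm_eq_abs, abs_of_pos (by positivity)]
      have hptwise : ∀ t, ‖(∫ x in Φ N, f x) - ∫ x in Φ N, f (x + t)‖
          ≤ M * (c * ρ N t) := by
        intro t
        have himg_meas : MeasurableSet ((fun x => x + t) '' Φ N) := by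
          rw [aux_image_eq_preimage]
          exact (measurable_add_const (-t)) (hΦmeas N)
        have himg_fin : volume ((fun x => x + t) '' Φ N) < ⊤ := by
          rw [aux_volume_image]; exact hΦfin N
        have hchg : (∫ x in Φ N, f (x + t)) = ∫ y in (fun x => x + t) '' Φ N, f y :=
          ((measurePreserving_add_right volume t).setIntegral_image_emb
            (measurableEmbedding_addRight t) f (Φ N)).symm
        rw [hchg]
        have hkey := aux_diff_bound hmeas hbd (hΦmeas N) himg_meas (hΦfin N) himg_fin
        have heq : (volume (symmDiff (Φ N) ((fun x => x + t) '' Φ N))).toReal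
            = c * ρ N t := by
          rw [hρdef]
          simp only [ENNReal.toReal_div]
          rw [← hcdef]
          field_simp
        rw [heq] at hkey
        exact hkey
      have hbound_int : Integrable (fun t => M * (c * ρ N t)) (volume.restrict Q) :=
        ((hρ_int N).const_mul c).const_mul M
      have hnorm := norm_integral_le_of_norm_le hbound_int (ae_of_all _ hptwise)
      have hconst : (∫ t in Q, M * (c * ρ N t)) = M * c * ∫ t in Q, ρ N t := by
        simp_rw [← mul_assoc, ← smul_eq_mul (a := M * c)]
        rw [integral_smul]
      rw [hconst] at hnorm
      calc c⁻¹ * κ⁻¹ * ‖∫ t in Q, ((∫ x in Φ N, f x) - ∫ x in Φ N, f (x + t))‖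
          ≤ c⁻¹ * κ⁻¹ * (M * c * ∫ t in Q, ρ N t) :=
            mul_le_mul_of_nonneg_left hnorm (by positivity)
        _ = M * κ⁻¹ * ∫ t in Q, ρ N t := by field_simp
    have htri : ‖c⁻¹ • (∫ x in Φ N, f x) - L‖
        ≤ ‖c⁻¹ • (∫ x in Φ N, f x) - G‖ + ‖G - L‖ := by
      simpa [dist_eq_norm] using dist_triangle (c⁻¹ • ∫ x in Φ N, f x) G L
    calc ‖c⁻¹ • (∫ x in Φ N, f x) - L‖
        ≤ ‖c⁻¹ • (∫ x in Φ N, f x) - G‖ + ‖G - L‖ := htri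
      _ ≤ M * κ⁻¹ * (∫ t in Q, ρ N t) + (ε / 2) := add_le_add hAG hGL
      _ = ε / 2 + M * κ⁻¹ * ∫ t in Q, ρ N t := by ring
  -- conclude
  have hδ : Tendsto (fun N => ε / 2 + M * κ⁻¹ * ∫ t in Q, ρ N t) atTop (𝓝 (ε / 2)) := by
    have h1 := (hDCT.const_mul (M * κ⁻¹)).const_add (ε / 2)
    simpa using h1
  have hev : ∀ᶠ N in atTop, ε / 2 + M * κ⁻¹ * (∫ t in Q, ρ N t) < ε :=
    hδ.eventually_lt_const (by linarith)
  filter_upwards [hev] with N hN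
  rw [dist_eq_norm]
  exact lt_of_le_of_lt (key N) hN
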